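/- For nonnegative measurable f on ℝ₊², and α, β > 0, one has ∬_{ℝ₊²} f(x,y) dx dy = (2/(αβ)) ∫₀^∞ r^{1/α + 1/β - 1} ∫₀^{π/2} f(r^{1/α} cos^{2/α} t, r^{1/β} sin^{2/β} t) · cos^{2/α - 1} t · sin^{2/β - 1} t dt dr. -/

import Mathlib

open MeasureTheory Set Real ENNReal

private lemma hasFDerivAt_aux (α β : ℝ) (p : ℝ × ℝ) (hp1 : p.1 ≠ 0)
    (hc : cos p.2 ≠ 0) (hs : sin p.2 ≠ 0) :
    HasFDerivAt (fun q : ℝ × ℝ => (q.1 ^ (1/α) * cos q.2 ^ (2/α), q.1 ^ (1/β) * sin q.2 ^ (2/β)))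
      (LinearMap.toContinuousLinearMap (Matrix.toLin (Module.Basis.finTwoProd ℝ) (Module.Basis.finTwoProd ℝ)
        !![1/α * p.1 ^ (1/α - 1) * cos p.2 ^ (2/α),
           p.1 ^ (1/α) * (2/α * cos p.2 ^ (2/α - 1) * -sin p.2);
           1/β * p.1 ^ (1/β - 1) * sin p.2 ^ (2/β),
           p.1 ^ (1/β) * (2/β * sin p.2 ^ (2/β - 1) * cos p.2)])) p := by
  have H1x : HasFDerivAt (fun q : ℝ × ℝ => q.1 ^ (1/α))
      ((1/α * p.1 ^ (1/α - 1)) • ContinuousLinearMap.fst ℝ ℝ ℝ) p :=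
    (Real.hasDerivAt_rpow_const (Or.inl hp1)).comp_hasFDerivAt p hasFDerivAt_fst
  have H2x : HasFDerivAt (fun q : ℝ × ℝ => q.1 ^ (1/β))
      ((1/β * p.1 ^ (1/β - 1)) • ContinuousLinearMap.fst ℝ ℝ ℝ) p :=
    (Real.hasDerivAt_rpow_const (Or.inl hp1)).comp_hasFDerivAt p hasFDerivAt_fst
  have H1c : HasFDerivAt (fun q : ℝ × ℝ => cos q.2 ^ (2/α))
      ((2/α * cos p.2 ^ (2/α - 1) * -sin p.2) • ContinuousLinearMap.snd ℝ ℝ ℝ) p :=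
    (((Real.hasDerivAt_rpow_const (p := 2/α) (Or.inl hc)).comp p.2
      (Real.hasDerivAt_cos p.2))).comp_hasFDerivAt p hasFDerivAt_snd
  have H2s : HasFDerivAt (fun q : ℝ × ℝ => sin q.2 ^ (2/β))
      ((2/β * sin p.2 ^ (2/β - 1) * cos p.2) • ContinuousLinearMap.snd ℝ ℝ ℝ) p :=
    (((Real.hasDerivAt_rpow_const (p := 2/β) (Or.inl hs)).comp p.2
      (Real.hasDerivAt_sin p.2))).comp_hasFDerivAt p hasFDerivAt_snd
  rw [Matrix.toLin_finTwoProd_toContinuousLinearMap]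
  refine (HasFDerivAt.prodMk (H1x.mul H1c) (H2x.mul H2s)).congr_fderiv ?_
  congr 1 <;>
  · simp only [smul_smul, smul_add]
    rw [add_comm]
    ring_nf

private lemma rpow_key {x c γ : ℝ} (hx : 0 < x) (hc : 0 < c) (hγ : 0 < γ) :
    (x ^ (1/γ) * c ^ (2/γ)) ^ γ = x * c ^ 2 := by
  rw [Real.mul_rpow (by positivity) (by positivity), ← Real.rpow_mul hx.le,
    ← Real.rpow_mul hc.le, one_div_mul_cancel hγ.ne', div_mul_cancel₀ _ hγ.ne',
    Real.rpow_one, show ((2:ℝ)) = ((2:ℕ):ℝ) by norm_num, Real.rpow_natCast]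

theorem stmt1 (α β : ℝ) (hα : 0 < α) (hβ : 0 < β) (f : ℝ → ℝ → ℝ≥0∞)
    (hf : Measurable (Function.uncurry f)) :
    ∫⁻ x in Ioi (0:ℝ), ∫⁻ y in Ioi (0:ℝ), f x y
      = ENNReal.ofReal (2/(α*β)) *
        ∫⁻ r in Ioi (0:ℝ), ENNReal.ofReal (r ^ (1/α + 1/β - 1)) *
          ∫⁻ t in Ioo 0 (π/2),
            ENNReal.ofReal ((cos t) ^ (2/α - 1) * (sin t) ^ (2/β - 1)) *
              f (r ^ (1/α) * (cos t) ^ (2/α)) (r ^ (1/β) * (sin t) ^ (2/β)) := by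
  set s : Set (ℝ × ℝ) := Ioi (0:ℝ) ×ˢ Ioo 0 (π/2) with hs_def
  have hs : MeasurableSet s := measurableSet_Ioi.prod measurableSet_Ioo
  set T : ℝ × ℝ → ℝ × ℝ :=
    fun q => (q.1 ^ (1/α) * cos q.2 ^ (2/α), q.1 ^ (1/β) * sin q.2 ^ (2/β)) with hT_def
  set B : ℝ × ℝ → (ℝ × ℝ) →L[ℝ] ℝ × ℝ := fun p =>
    LinearMap.toContinuousLinearMap (Matrix.toLin (Module.Basis.finTwoProd ℝ) (Module.Basis.finTwoProd ℝ)
        !![1/α * p.1 ^ (1/α - 1) * cos p.2 ^ (2/α),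
           p.1 ^ (1/α) * (2/α * cos p.2 ^ (2/α - 1) * -sin p.2);
           1/β * p.1 ^ (1/β - 1) * sin p.2 ^ (2/β),
           p.1 ^ (1/β) * (2/β * sin p.2 ^ (2/β - 1) * cos p.2)]) with hB_def
  -- basic positivity facts on `s`
  have hmem : ∀ p : ℝ × ℝ, p ∈ s → 0 < p.1 ∧ 0 < cos p.2 ∧ 0 < sin p.2 := by
    rintro ⟨r, t⟩ ⟨hr, ht⟩
    refine ⟨hr, Real.cos_pos_of_mem_Ioo ⟨by linarith [ht.1, pi_pos], ht.2⟩,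
      Real.sin_pos_of_pos_of_lt_pi ht.1 (by linarith [ht.2, pi_pos])⟩
  have hder : ∀ p ∈ s, HasFDerivWithinAt T (B p) s p := fun p hp =>
    (hasFDerivAt_aux α β p (hmem p hp).1.ne' (hmem p hp).2.1.ne'
      (hmem p hp).2.2.ne').hasFDerivWithinAt
  -- determinant computation
  have hdet : ∀ p ∈ s, (B p).det
      = 2/(α*β) * (p.1 ^ (1/α + 1/β - 1) * (cos p.2 ^ (2/α - 1) * sin p.2 ^ (2/β - 1))) := by
    intro p hp
    obtain ⟨hp1, hc, hsin⟩ := hmem p hp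
    have h1 : p.1 ^ (1/α - 1) * p.1 ^ (1/β) = p.1 ^ (1/α + 1/β - 1) := by
      rw [← Real.rpow_add hp1]; ring_nf
    have h2 : p.1 ^ (1/α) * p.1 ^ (1/β - 1) = p.1 ^ (1/α + 1/β - 1) := by
      rw [← Real.rpow_add hp1]; ring_nf
    have hc2 : cos p.2 ^ (2/α) = cos p.2 ^ (2/α - 1) * cos p.2 := by
      have h := Real.rpow_add hc (2/α - 1) 1
      rw [Real.rpow_one, sub_add_cancel] at h; exact h
    have hs2 : sin p.2 ^ (2/β) = sin p.2 ^ (2/β - 1) * sin p.2 := by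
      have h := Real.rpow_add hsin (2/β - 1) 1
      rw [Real.rpow_one, sub_add_cancel] at h; exact h
    simp only [hB_def, LinearMap.det_toContinuousLinearMap, LinearMap.det_toLin,
      Matrix.det_fin_two_of]
    rw [hc2, hs2]
    have hpy := sin_sq_add_cos_sq p.2
    linear_combination (2/(α*β) * (cos p.2 ^ (2/α-1) * sin p.2 ^ (2/β-1))) *
      (cos p.2 ^ 2 * h1 + sin p.2 ^ 2 * h2 + p.1 ^ (1/α + 1/β - 1) * hpy)
  -- injectivity
  have hinj : InjOn T s := by
    rintro ⟨r₁, t₁⟩ hp ⟨r₂, t₂⟩ hq h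
    obtain ⟨hr₁, hc₁, hs₁⟩ := hmem _ hp
    obtain ⟨hr₂, hc₂, hs₂⟩ := hmem _ hq
    simp only [hT_def, Prod.mk.injEq] at h
    have e1 : r₁ * cos t₁ ^ 2 = r₂ * cos t₂ ^ 2 := by
      rw [← rpow_key hr₁ hc₁ hα, ← rpow_key hr₂ hc₂ hα, h.1]
    have e2 : r₁ * sin t₁ ^ 2 = r₂ * sin t₂ ^ 2 := by
      rw [← rpow_key hr₁ hs₁ hβ, ← rpow_key hr₂ hs₂ hβ, h.2]
    have hr : r₁ = r₂ := by
      have := sin_sq_add_cos_sq t₁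
      have := sin_sq_add_cos_sq t₂
      nlinarith
    subst hr
    have hcsq : cos t₁ ^ 2 = cos t₂ ^ 2 := mul_left_cancel₀ (ne_of_gt hr₁) e1
    have h3 : (cos t₁ - cos t₂) * (cos t₁ + cos t₂) = 0 := by linear_combination hcsq
    have hcc : cos t₁ = cos t₂ := by
      rcases mul_eq_zero.1 h3 with h4 | h4
      · linarith
      · linarith
    have : t₁ = t₂ := by
      have h1 : t₁ ∈ Icc 0 π := ⟨hp.2.1.le, by linarith [hp.2.2, pi_pos]⟩
      have h2 : t₂ ∈ Icc 0 π := ⟨hq.2.1.le, by linarith [hq.2.2, pi_pos]⟩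
      exact Real.injOn_cos h1 h2 hcc
    simp [this]
  -- image
  have himg : T '' s = Ioi (0:ℝ) ×ˢ Ioi (0:ℝ) := by
    apply Subset.antisymm
    · rintro _ ⟨⟨r, t⟩, hp, rfl⟩
      obtain ⟨hr, hc, hsin⟩ := hmem _ hp
      exact ⟨mul_pos (Real.rpow_pos_of_pos hr _) (Real.rpow_pos_of_pos hc _),
        mul_pos (Real.rpow_pos_of_pos hr _) (Real.rpow_pos_of_pos hsin _)⟩
    · rintro ⟨x, y⟩ ⟨hx, hy⟩
      simp only [mem_Ioi] at hx hy
      set r : ℝ := x ^ α + y ^ β with hr_def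
      have hxα : (0:ℝ) < x ^ α := Real.rpow_pos_of_pos hx _
      have hyβ : (0:ℝ) < y ^ β := Real.rpow_pos_of_pos hy _
      have hr : 0 < r := by positivity
      set t : ℝ := Real.arcsin (Real.sqrt (y ^ β / r)) with ht_def
      have hlt1 : y ^ β / r < 1 := by
        rw [div_lt_one hr]; simp only [hr_def]; linarith
      have hge0 : 0 < y ^ β / r := by positivity
      have hsq : Real.sqrt (y ^ β / r) < 1 := by
        rw [show (1:ℝ) = Real.sqrt 1 by simp]
        exact Real.sqrt_lt_sqrt hge0.le hlt1
      have hsin : sin t = Real.sqrt (y ^ β / r) :=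
        Real.sin_arcsin (le_trans (by norm_num) (Real.sqrt_nonneg _)) hsq.le
      have hcos : cos t = Real.sqrt (x ^ α / r) := by
        rw [ht_def, Real.cos_arcsin, Real.sq_sqrt hge0.le]
        congr 1
        field_simp
        ring
      have ht : t ∈ Ioo 0 (π/2) := by
        constructor
        · rw [ht_def]; exact Real.arcsin_pos.2 (Real.sqrt_pos.2 hge0)
        · rw [ht_def]; exact Real.arcsin_lt_pi_div_two.2 hsq
      refine ⟨(r, t), ⟨hr, ht⟩, ?_⟩
      have coord : ∀ z γ : ℝ, 0 < z → 0 < γ →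
          r ^ (1/γ) * Real.sqrt (z ^ γ / r) ^ (2/γ) = z := by
        intro z γ hz hγ
        have hzγ : (0:ℝ) < z ^ γ := Real.rpow_pos_of_pos hz _
        rw [Real.sqrt_eq_rpow,
          ← Real.rpow_mul (by positivity : (0:ℝ) ≤ z ^ γ / r),
          show (1/2 : ℝ) * (2/γ) = 1/γ by ring]
        rw [Real.div_rpow hzγ.le hr.le, ← Real.rpow_mul hz.le,
          mul_one_div_cancel hγ.ne', Real.rpow_one]
        field_simp
      simp only [hT_def, Prod.mk.injEq]
      constructor
      · rw [hcos]; exact coord x α hx hα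
      · rw [hsin]; exact coord y β hy hβ
  -- measurability
  have hTm : Measurable T := by
    apply Measurable.prod <;> fun_prop
  have hFm : Measurable fun p : ℝ × ℝ => f (T p).1 (T p).2 := hf.comp hTm
  have hGm : Measurable fun p : ℝ × ℝ =>
      ENNReal.ofReal (p.1 ^ (1/α + 1/β - 1)) *
        (ENNReal.ofReal (cos p.2 ^ (2/α - 1) * sin p.2 ^ (2/β - 1)) *
          f (T p).1 (T p).2) := by
    apply Measurable.mul
    · fun_prop
    · exact Measurable.mul (by fun_prop) hFm
  -- change of variables
  have COV := lintegral_image_eq_lintegral_abs_det_fderiv_mul volume hs hder hinj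
    (fun p : ℝ × ℝ => f p.1 p.2)
  rw [himg] at COV
  calc ∫⁻ x in Ioi (0:ℝ), ∫⁻ y in Ioi (0:ℝ), f x y
      = ∫⁻ p in Ioi (0:ℝ) ×ˢ Ioi (0:ℝ), f p.1 p.2 := by
        rw [Measure.volume_eq_prod, ← Measure.prod_restrict,
          lintegral_prod (fun z : ℝ × ℝ => f z.1 z.2) hf.aemeasurable]
    _ = ∫⁻ p in s, ENNReal.ofReal |(B p).det| * f (T p).1 (T p).2 := COV
    _ = ∫⁻ p in s, ENNReal.ofReal (2/(α*β)) *
          (ENNReal.ofReal (p.1 ^ (1/α + 1/β - 1)) *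
            (ENNReal.ofReal (cos p.2 ^ (2/α - 1) * sin p.2 ^ (2/β - 1)) *
              f (T p).1 (T p).2)) := by
        apply setLIntegral_congr_fun hs (fun p hp => ?_)
        obtain ⟨hp1, hc, hsin⟩ := hmem p hp
        have hpos : (0:ℝ) < 2/(α*β) * (p.1 ^ (1/α + 1/β - 1) *
            (cos p.2 ^ (2/α - 1) * sin p.2 ^ (2/β - 1))) := by
          have := Real.rpow_pos_of_pos hp1 (1/α + 1/β - 1)
          have := Real.rpow_pos_of_pos hc (2/α - 1)
          have := Real.rpow_pos_of_pos hsin (2/β - 1)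
          positivity
        rw [hdet p hp, abs_of_pos hpos,
          ENNReal.ofReal_mul (by positivity),
          ENNReal.ofReal_mul (Real.rpow_nonneg hp1.le _), mul_assoc, mul_assoc]
    _ = ENNReal.ofReal (2/(α*β)) * ∫⁻ p in s,
          ENNReal.ofReal (p.1 ^ (1/α + 1/β - 1)) *
            (ENNReal.ofReal (cos p.2 ^ (2/α - 1) * sin p.2 ^ (2/β - 1)) *
              f (T p).1 (T p).2) :=
        lintegral_const_mul' _ _ ENNReal.ofReal_ne_top
    _ = ENNReal.ofReal (2/(α*β)) *
        ∫⁻ r in Ioi (0:ℝ), ENNReal.ofReal (r ^ (1/α + 1/β - 1)) *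
          ∫⁻ t in Ioo 0 (π/2),
            ENNReal.ofReal ((cos t) ^ (2/α - 1) * (sin t) ^ (2/β - 1)) *
              f (r ^ (1/α) * (cos t) ^ (2/α)) (r ^ (1/β) * (sin t) ^ (2/β)) := by
        congr 1
        rw [hs_def, Measure.volume_eq_prod, ← Measure.prod_restrict,
          lintegral_prod _ hGm.aemeasurable]
        refine lintegral_congr fun r => ?_
        simp only [hT_def]
        rw [lintegral_const_mul' _ _ ENNReal.ofReal_ne_top]
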